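/- Let 3 ≤ h ≤ k−1 and let A = {a₁ < a₂ < ⋯ < a_k} be a set of k positive integers. Let A_{h+1} = {a₁,…,a_{h+1}}. If |h^∧_± A_{h+1}| ≥ (h+1)² + t for some t ≥ 0, then |h^∧_± A| ≥ 2hk − h² + 1 + t. -/

import Mathlib

open Finset

/-- The restricted `h`-fold signed sumset of a finite set `A` of integers:
all sums `∑ λᵢ aᵢ` with `λᵢ ∈ {-1,0,1}` and `∑ |λᵢ| = h`. -/
def signedSumset (h : ℕ) (A : Finset ℤ) : Set ℤ :=
  {s | ∃ f : ℤ → ℤ, (∀ a, f a = -1 ∨ f a = 0 ∨ f a = 1) ∧ (∀ a ∉ A, f a = 0) ∧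
    (∑ a ∈ A, |f a|) = (h : ℤ) ∧ s = ∑ a ∈ A, f a * a}

def Tidx (h k i j : ℕ) : Finset ℕ :=
  (Finset.Icc 2 (h+1-i) ∪ {j}) ∪ Finset.Icc (k-i+2) k

def Tsum (a : ℕ → ℤ) (h k i j : ℕ) : ℤ :=
  (∑ u ∈ Finset.Icc 2 (h+1-i), a u) + a j + (∑ u ∈ Finset.Icc (k-i+2) k, a u)

lemma signedSumset_mono (h : ℕ) {A B : Finset ℤ} (hAB : A ⊆ B) :
    signedSumset h A ⊆ signedSumset h B := by
  rintro s ⟨f, hf1, hf0, hsum, rfl⟩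
  refine ⟨f, hf1, fun x hx => hf0 x (fun hxA => hx (hAB hxA)), ?_, ?_⟩
  · rw [← Finset.sum_subset hAB (fun x _ hxA => by rw [hf0 x hxA]; simp), hsum]
  · rw [← Finset.sum_subset hAB (fun x _ hxA => by rw [hf0 x hxA]; ring)]

lemma signedSumset_finite (h : ℕ) (A : Finset ℤ) : (signedSumset h A).Finite := by
  apply Set.Finite.subset (Set.finite_Icc (-(∑ x ∈ A, |x|)) (∑ x ∈ A, |x|))
  rintro s ⟨f, hf1, hf0, hsum, rfl⟩
  have hb : ∀ x ∈ A, -|x| ≤ f x * x ∧ f x * x ≤ |x| := by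
    intro x hx
    rcases hf1 x with h'|h'|h' <;> rw [h'] <;> constructor <;> simp [neg_abs_le, le_abs_self, abs_nonneg] <;> linarith [neg_abs_le x, le_abs_self x]
  constructor
  · rw [← Finset.sum_neg_distrib]
    exact Finset.sum_le_sum (fun x hx => (hb x hx).1)
  · exact Finset.sum_le_sum (fun x hx => (hb x hx).2)

lemma mem_signedSumset_of_subset (h k : ℕ) (a : ℕ → ℤ)
    (hinj : Set.InjOn a (Finset.Icc 1 k)) (S : Finset ℕ) (hS : S ⊆ Finset.Icc 1 k)
    (hcard : S.card = h) (ε : ℤ) (hε : ε = 1 ∨ ε = -1) :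
    ε * ∑ u ∈ S, a u ∈ signedSumset h ((Finset.Icc 1 k).image a) := by
  have hinjS : Set.InjOn a S := hinj.mono (by exact_mod_cast hS)
  have hinjS' : ∀ x ∈ S, ∀ y ∈ S, a x = a y → x = y :=
    fun x hx y hy => hinjS (Finset.mem_coe.mpr hx) (Finset.mem_coe.mpr hy)
  have himg : S.image a ⊆ (Finset.Icc 1 k).image a := Finset.image_subset_image hS
  refine ⟨fun x => if x ∈ S.image a then ε else 0, ?_, ?_, ?_, ?_⟩
  · intro x; by_cases hx : x ∈ S.image a <;> simp only [if_pos, if_neg, hx, if_true, if_false] <;> tauto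
  · intro x hx; simp only [if_neg (fun h' => hx (himg h'))]
  · rw [← Finset.sum_subset himg (fun x _ hx => by simp only [if_neg hx, abs_zero])]
    have : ∀ x ∈ S.image a, |(fun x => if x ∈ S.image a then ε else 0) x| = 1 := by
      intro x hx; simp only [if_pos hx]; rcases hε with rfl|rfl <;> simp
    rw [Finset.sum_congr rfl this, Finset.sum_const, Finset.card_image_of_injOn hinjS, hcard]
    simp
  · rw [← Finset.sum_subset himg (fun x _ hx => by simp only [if_neg hx, zero_mul])]
    rw [Finset.sum_image hinjS', Finset.mul_sum]
    exact Finset.sum_congr rfl fun x hx => by simp only [if_pos (Finset.mem_image_of_mem a hx)]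

lemma signedSumset_bdd (h k : ℕ) (a : ℕ → ℤ) (hm : h + 1 ≤ k) (hh : 1 ≤ h)
    (hpos : ∀ i ∈ Finset.Icc 1 k, 0 < a i)
    (hmono : ∀ i ∈ Finset.Icc 1 k, ∀ j ∈ Finset.Icc 1 k, i < j → a i < a j) :
    ∀ s ∈ signedSumset h ((Finset.Icc 1 (h+1)).image a),
      -(∑ u ∈ Finset.Icc 2 (h+1), a u) ≤ s ∧ s ≤ ∑ u ∈ Finset.Icc 2 (h+1), a u := by
  have hss : Finset.Icc 1 (h+1) ⊆ Finset.Icc 1 k := Finset.Icc_subset_Icc le_rfl hm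
  have hinj' : ∀ x ∈ Finset.Icc 1 (h+1), ∀ y ∈ Finset.Icc 1 (h+1), a x = a y → x = y := by
    intro x hx y hy hxy
    by_contra hne
    rcases lt_trichotomy x y with hlt | heq | hgt
    · exact absurd hxy (ne_of_lt (hmono x (hss hx) y (hss hy) hlt))
    · exact hne heq
    · exact absurd hxy.symm (ne_of_lt (hmono y (hss hy) x (hss hx) hgt))
  rintro s ⟨f, hf1, hf0, hsum, rfl⟩
  set A' := (Finset.Icc 1 (h+1)).image a with hA'
  have hApos : ∀ x ∈ A', 0 < x := by
    intro x hx
    obtain ⟨u, hu, rfl⟩ := Finset.mem_image.mp hx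
    exact hpos u (hss hu)
  have habs : ∀ x, |f x| = 0 ∨ |f x| = 1 := by
    intro x; rcases hf1 x with h'|h'|h' <;> simp [h']
  set Tf := A'.filter (fun x => f x ≠ 0) with hTf
  have hTsub : Tf ⊆ A' := Finset.filter_subset _ _
  have hfiltersum : ∀ g : ℤ → ℤ, (∀ x, f x = 0 → g x = 0) → ∑ x ∈ A', g x = ∑ x ∈ Tf, g x := by
    intro g hg
    rw [hTf, Finset.sum_filter_of_ne]
    intro x _ hgx
    intro hfx
    exact hgx (hg x hfx)
  have hcardT : Tf.card = h := by
    have h1 : ∑ x ∈ A', |f x| = ∑ x ∈ Tf, |f x| := hfiltersum _ (fun x hx => by simp [hx])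
    have h2 : ∑ x ∈ Tf, |f x| = Tf.card := by
      rw [Finset.sum_congr rfl (fun x hx => ?_), Finset.sum_const, nsmul_eq_mul, mul_one]
      rcases habs x with h'|h'
      · exact absurd (abs_eq_zero.mp h') (Finset.mem_filter.mp hx).2
      · exact h'
    have := hsum
    rw [h1, h2] at this
    exact_mod_cast this
  have hcardA' : A'.card = h + 1 := by
    rw [hA', Finset.card_image_of_injOn (fun x hx y hy => hinj' x hx y hy), Nat.card_Icc]; omega
  have hIccsplit : ∑ u ∈ Finset.Icc 1 (h+1), a u = a 1 + ∑ u ∈ Finset.Icc 2 (h+1), a u := by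
    rw [show Finset.Icc 1 (h+1) = insert 1 (Finset.Icc 2 (h+1)) from by
      ext x; simp only [Finset.mem_Icc, Finset.mem_insert]; omega]
    rw [Finset.sum_insert (by simp)]
  have hkey : ∑ x ∈ Tf, x ≤ ∑ u ∈ Finset.Icc 2 (h+1), a u := by
    have hsA' : ∑ x ∈ A', x = ∑ u ∈ Finset.Icc 1 (h+1), a u :=
      Finset.sum_image hinj'
    have hsd := Finset.sum_sdiff hTsub (f := fun x => x)
    have hcd : (A' \ Tf).card = 1 := by rw [Finset.card_sdiff_of_subset hTsub, hcardT, hcardA']; omega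
    obtain ⟨y, hy⟩ := Finset.card_eq_one.mp hcd
    have hymem : y ∈ A' := (Finset.sdiff_subset) (hy ▸ Finset.mem_singleton_self y)
    obtain ⟨u, hu, rfl⟩ := Finset.mem_image.mp hymem
    have h1le : a 1 ≤ a u := by
      rcases Nat.eq_or_lt_of_le (Finset.mem_Icc.mp hu).1 with h'|h'
      · rw [← h']
      · exact le_of_lt (hmono 1 (Finset.mem_Icc.mpr ⟨le_rfl, by omega⟩) u (hss hu) h')
    have : ∑ x ∈ A' \ Tf, x = a u := by rw [hy, Finset.sum_singleton]
    rw [this] at hsd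
    rw [hsA', hIccsplit] at hsd
    linarith
  constructor
  · have hlb : ∀ x ∈ A', -(|f x| * x) ≤ f x * x := by
      intro x hx
      have := (hApos x hx).le
      nlinarith [neg_abs_le (f x), le_abs_self (f x)]
    have h1 : ∑ x ∈ A', -(|f x| * x) ≤ ∑ x ∈ A', f x * x := Finset.sum_le_sum hlb
    have h2 : ∑ x ∈ A', -(|f x| * x) = -(∑ x ∈ Tf, x) := by
      rw [← Finset.sum_neg_distrib] at *
      rw [hfiltersum _ (fun x hx => by simp [hx])]
      rw [Finset.sum_congr rfl (fun x hx => ?_)]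
      rcases habs x with h'|h'
      · exact absurd (abs_eq_zero.mp h') (Finset.mem_filter.mp hx).2
      · rw [h', one_mul]
    linarith
  · have hub : ∀ x ∈ A', f x * x ≤ |f x| * x := by
      intro x hx
      have := (hApos x hx).le
      nlinarith [le_abs_self (f x)]
    have h1 : ∑ x ∈ A', f x * x ≤ ∑ x ∈ A', |f x| * x := Finset.sum_le_sum hub
    have h2 : ∑ x ∈ A', |f x| * x = ∑ x ∈ Tf, x := by
      rw [hfiltersum _ (fun x hx => by simp [hx])]
      rw [Finset.sum_congr rfl (fun x hx => ?_)]
      rcases habs x with h'|h'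
      · exact absurd (abs_eq_zero.mp h') (Finset.mem_filter.mp hx).2
      · rw [h', one_mul]
    linarith

section
variable {a : ℕ → ℤ} {h k i j : ℕ}

lemma Tidx_subset (hi1 : 1 ≤ i) (hih : i ≤ h) (hj1 : h+2-i ≤ j) (hj2 : j ≤ k-i+1)
    (hhk : h + 1 ≤ k) : Tidx h k i j ⊆ Finset.Icc 1 k := by
  intro x hx
  simp only [Tidx, Finset.mem_union, Finset.mem_Icc, Finset.mem_singleton] at hx ⊢
  omega

lemma Tidx_card (hi1 : 1 ≤ i) (hih : i ≤ h) (hj1 : h+2-i ≤ j) (hj2 : j ≤ k-i+1)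
    (hhk : h + 1 ≤ k) : (Tidx h k i j).card = h := by
  have d1 : Disjoint (Finset.Icc 2 (h+1-i)) ({j} : Finset ℕ) := by
    simp only [Finset.disjoint_singleton_right, Finset.mem_Icc]; omega
  have d2 : Disjoint (Finset.Icc 2 (h+1-i) ∪ {j}) (Finset.Icc (k-i+2) k) := by
    rw [Finset.disjoint_left]
    intro x hx hx2
    simp only [Finset.mem_union, Finset.mem_Icc, Finset.mem_singleton] at hx hx2
    omega
  rw [Tidx, Finset.card_union_of_disjoint d2, Finset.card_union_of_disjoint d1,
    Nat.card_Icc, Nat.card_Icc, Finset.card_singleton]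
  omega

lemma Tidx_sum (hi1 : 1 ≤ i) (hih : i ≤ h) (hj1 : h+2-i ≤ j) (hj2 : j ≤ k-i+1)
    (hhk : h + 1 ≤ k) : ∑ u ∈ Tidx h k i j, a u = Tsum a h k i j := by
  have d1 : Disjoint (Finset.Icc 2 (h+1-i)) ({j} : Finset ℕ) := by
    simp only [Finset.disjoint_singleton_right, Finset.mem_Icc]; omega
  have d2 : Disjoint (Finset.Icc 2 (h+1-i) ∪ {j}) (Finset.Icc (k-i+2) k) := by
    rw [Finset.disjoint_left]
    intro x hx hx2
    simp only [Finset.mem_union, Finset.mem_Icc, Finset.mem_singleton] at hx hx2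
    omega
  rw [Tidx, Finset.sum_union d2, Finset.sum_union d1, Finset.sum_singleton, Tsum]

lemma Tsum_lt_Tsum_j {j' : ℕ} (hj : 1 ≤ j) (hjj : j < j') (hj' : j' ≤ k)
    (hmono : ∀ i ∈ Finset.Icc 1 k, ∀ j ∈ Finset.Icc 1 k, i < j → a i < a j) :
    Tsum a h k i j < Tsum a h k i j' := by
  have := hmono j (Finset.mem_Icc.mpr ⟨hj, by omega⟩) j' (Finset.mem_Icc.mpr ⟨by omega, hj'⟩) hjj
  simp only [Tsum]; linarith

lemma Tsum_boundary (hi1 : 1 ≤ i) (hih : i ≤ h - 1) (hh : 2 ≤ h) (hhk : h + 1 ≤ k) :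
    Tsum a h k i (k-i+1) = Tsum a h k (i+1) (h+1-i) := by
  have e1 : Finset.Icc 2 (h+1-i) = insert (h+1-i) (Finset.Icc 2 (h+1-(i+1))) := by
    ext x; simp only [Finset.mem_Icc, Finset.mem_insert]; omega
  have e2 : Finset.Icc (k-(i+1)+2) k = insert (k-i+1) (Finset.Icc (k-i+2) k) := by
    ext x; simp only [Finset.mem_Icc, Finset.mem_insert]; omega
  have m1 : (h+1-i) ∉ Finset.Icc 2 (h+1-(i+1)) := by simp only [Finset.mem_Icc]; omega
  have m2 : (k-i+1) ∉ Finset.Icc (k-i+2) k := by simp only [Finset.mem_Icc]; omega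
  simp only [Tsum, e1, e2, Finset.sum_insert m1, Finset.sum_insert m2]
  have : h + 1 - i = h + 1 - (i+1) + 1 := by omega
  ring
end

lemma Tsum_start_mono {a : ℕ → ℤ} {h k : ℕ} (hh : 2 ≤ h) (hhk : h + 1 ≤ k)
    (hmono : ∀ i ∈ Finset.Icc 1 k, ∀ j ∈ Finset.Icc 1 k, i < j → a i < a j) :
    ∀ i i', 1 ≤ i → i ≤ i' → i' ≤ h → Tsum a h k i (h+2-i) ≤ Tsum a h k i' (h+2-i') := by
  intro i i' hi1 hii' hi'h
  induction i' , hii' using Nat.le_induction with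
  | base => exact le_rfl
  | succ n hn ih =>
    have hnh : n ≤ h - 1 := by omega
    have step : Tsum a h k n (h+2-n) ≤ Tsum a h k (n+1) (h+2-(n+1)) := by
      have hle : h+2-n ≤ k-n+1 := by omega
      have h1 : Tsum a h k n (h+2-n) ≤ Tsum a h k n (k-n+1) := by
        rcases Nat.lt_or_ge (h+2-n) (k-n+1) with hlt | hge
        · exact (Tsum_lt_Tsum_j (by omega) hlt (by omega) hmono).le
        · have : h+2-n = k-n+1 := by omega
          rw [this]
      have h2 : Tsum a h k n (k-n+1) = Tsum a h k (n+1) (h+1-n) :=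
        Tsum_boundary (by omega) hnh hh hhk
      have h3 : h+1-n = h+2-(n+1) := by omega
      calc Tsum a h k n (h+2-n) ≤ Tsum a h k n (k-n+1) := h1
        _ = Tsum a h k (n+1) (h+1-n) := h2
        _ = Tsum a h k (n+1) (h+2-(n+1)) := by rw [h3]
    exact le_trans (ih (by omega)) step

lemma Tsum_lt_of_lex {a : ℕ → ℤ} {h k i j i' j' : ℕ} (hh : 2 ≤ h) (hhk : h + 1 ≤ k)
    (hmono : ∀ i ∈ Finset.Icc 1 k, ∀ j ∈ Finset.Icc 1 k, i < j → a i < a j)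
    (hi : 1 ≤ i) (hih : i ≤ h) (hj1 : h+3-i ≤ j) (hj2 : j ≤ k-i+1)
    (hi' : 1 ≤ i') (hih' : i' ≤ h) (hj1' : h+3-i' ≤ j') (hj2' : j' ≤ k-i'+1)
    (hlex : i < i' ∨ (i = i' ∧ j < j')) :
    Tsum a h k i j < Tsum a h k i' j' := by
  rcases hlex with hii' | ⟨rfl, hjj'⟩
  · have h1 : Tsum a h k i j ≤ Tsum a h k i (k-i+1) := by
      rcases Nat.lt_or_ge j (k-i+1) with hlt | hge
      · exact (Tsum_lt_Tsum_j (by omega) hlt (by omega) hmono).le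
      · have : j = k-i+1 := by omega
        rw [this]
    have h2 : Tsum a h k i (k-i+1) = Tsum a h k (i+1) (h+1-i) :=
      Tsum_boundary hi (by omega) hh hhk
    have h3 : h+1-i = h+2-(i+1) := by omega
    have h4 : Tsum a h k (i+1) (h+2-(i+1)) ≤ Tsum a h k i' (h+2-i') :=
      Tsum_start_mono hh hhk hmono (i+1) i' (by omega) (by omega) hih'
    have h5 : Tsum a h k i' (h+2-i') < Tsum a h k i' j' :=
      Tsum_lt_Tsum_j (by omega) (by omega) (by omega) hmono
    rw [h3] at h2
    linarith
  · exact Tsum_lt_Tsum_j (by omega) hjj' (by omega) hmono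

lemma M_lt_Tsum {a : ℕ → ℤ} {h k i j : ℕ} (hh : 2 ≤ h) (hhk : h + 1 ≤ k)
    (hmono : ∀ i ∈ Finset.Icc 1 k, ∀ j ∈ Finset.Icc 1 k, i < j → a i < a j)
    (hi : 1 ≤ i) (hih : i ≤ h) (hj1 : h+3-i ≤ j) (hj2 : j ≤ k-i+1) :
    Tsum a h k 1 (h+1) < Tsum a h k i j := by
  have h0 : (h+1) = h+2-1 := by omega
  have h1 : Tsum a h k 1 (h+2-1) ≤ Tsum a h k i (h+2-i) :=
    Tsum_start_mono hh hhk hmono 1 i le_rfl hi hih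
  have h2 : Tsum a h k i (h+2-i) < Tsum a h k i j :=
    Tsum_lt_Tsum_j (by omega) (by omega) (by omega) hmono
  rw [h0]
  linarith

lemma M_eq_Tsum {a : ℕ → ℤ} {h k : ℕ} (hh : 1 ≤ h) (hhk : h + 1 ≤ k) :
    ∑ u ∈ Finset.Icc 2 (h+1), a u = Tsum a h k 1 (h+1) := by
  have e1 : Finset.Icc 2 (h+1) = insert (h+1) (Finset.Icc 2 (h+1-1)) := by
    ext x; simp only [Finset.mem_Icc, Finset.mem_insert]; omega
  have e2 : Finset.Icc (k-1+2) k = (∅ : Finset ℕ) := by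
    ext x; simp only [Finset.mem_Icc, Finset.notMem_empty, iff_false]; omega
  have m1 : (h+1) ∉ Finset.Icc 2 (h+1-1) := by simp only [Finset.mem_Icc]; omega
  rw [Tsum, e2, Finset.sum_empty, e1, Finset.sum_insert m1]
  ring

theorem stmt2 (h k t : ℕ) (hh : 3 ≤ h) (hhk : h ≤ k - 1) (hk : 4 ≤ k)
    (a : ℕ → ℤ) (hpos : ∀ i ∈ Finset.Icc 1 k, 0 < a i)
    (hmono : ∀ i ∈ Finset.Icc 1 k, ∀ j ∈ Finset.Icc 1 k, i < j → a i < a j)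
    (hsub : (h + 1) ^ 2 + t ≤
      (signedSumset h ((Finset.Icc 1 (h + 1)).image a)).ncard) :
    2 * h * k - h ^ 2 + 1 + t ≤
      (signedSumset h ((Finset.Icc 1 k).image a)).ncard := by
  have hh1k : h + 1 ≤ k := by omega
  have hinj : Set.InjOn a (Finset.Icc 1 k) := by
    intro x hx y hy hxy
    simp only [Finset.coe_Icc, Set.mem_Icc] at hx hy
    by_contra hne
    rcases lt_trichotomy x y with hlt | heq | hgt
    · exact absurd hxy (ne_of_lt (hmono x (Finset.mem_Icc.mpr hx) y (Finset.mem_Icc.mpr hy) hlt))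
    · exact hne heq
    · exact absurd hxy.symm
        (ne_of_lt (hmono y (Finset.mem_Icc.mpr hy) x (Finset.mem_Icc.mpr hx) hgt))
  set M : ℤ := ∑ u ∈ Finset.Icc 2 (h+1), a u with hMdef
  have hM0 : 0 < M := by
    apply Finset.sum_pos
    · intro u hu
      exact hpos u (Finset.mem_Icc.mpr (by simp only [Finset.mem_Icc] at hu; omega))
    · exact ⟨2, Finset.mem_Icc.mpr (by omega)⟩
  set P : Finset (ℕ × ℕ) :=
    (Finset.Icc 1 h).biUnion (fun i => {i} ×ˢ Finset.Icc (h+3-i) (k-i+1)) with hPdef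
  have hPmem : ∀ p : ℕ × ℕ, p ∈ P ↔
      (1 ≤ p.1 ∧ p.1 ≤ h ∧ h+3-p.1 ≤ p.2 ∧ p.2 ≤ k-p.1+1) := by
    intro p
    simp only [hPdef, Finset.mem_biUnion, Finset.mem_product, Finset.mem_Icc,
      Finset.mem_singleton]
    constructor
    · rintro ⟨i, ⟨hi1, hi2⟩, rfl, hj⟩; exact ⟨hi1, hi2, hj.1, hj.2⟩
    · rintro ⟨h1, h2, h3, h4⟩; exact ⟨p.1, ⟨h1, h2⟩, rfl, h3, h4⟩
  have hPcard : P.card = h * (k - h - 1) := by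
    rw [hPdef, Finset.card_biUnion]
    · have : ∀ i ∈ Finset.Icc 1 h, ({i} ×ˢ Finset.Icc (h+3-i) (k-i+1)).card = k - h - 1 := by
        intro i hi
        simp only [Finset.mem_Icc] at hi
        rw [Finset.card_product, Finset.card_singleton, one_mul, Nat.card_Icc]
        omega
      rw [Finset.sum_congr rfl this, Finset.sum_const, Nat.card_Icc, smul_eq_mul]
      norm_num
    · intro i _ j _ hij
      rw [Function.onFun, Finset.disjoint_left]
      rintro ⟨x, y⟩ hx hy
      simp only [Finset.mem_product, Finset.mem_singleton] at hx hy
      exact hij (hx.1 ▸ hy.1 ▸ rfl)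
  set Tfun : ℕ × ℕ → ℤ := fun p => Tsum a h k p.1 p.2 with hTfundef
  have hTlex : ∀ p ∈ P, ∀ q ∈ P, (p.1 < q.1 ∨ (p.1 = q.1 ∧ p.2 < q.2)) → Tfun p < Tfun q := by
    intro p hp q hq hlex
    obtain ⟨a1, a2, a3, a4⟩ := (hPmem p).mp hp
    obtain ⟨b1, b2, b3, b4⟩ := (hPmem q).mp hq
    exact Tsum_lt_of_lex (by omega) hh1k hmono a1 a2 a3 a4 b1 b2 b3 b4 hlex
  have hTinj : Set.InjOn Tfun P := by
    intro p hp q hq heq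
    by_contra hne
    have hp' := Finset.mem_coe.mp hp
    have hq' := Finset.mem_coe.mp hq
    rcases lt_trichotomy p.1 q.1 with h1 | h1 | h1
    · exact absurd heq (ne_of_lt (hTlex p hp' q hq' (Or.inl h1)))
    · rcases lt_trichotomy p.2 q.2 with h2 | h2 | h2
      · exact absurd heq (ne_of_lt (hTlex p hp' q hq' (Or.inr ⟨h1, h2⟩)))
      · exact hne (Prod.ext h1 h2)
      · exact absurd heq.symm (ne_of_lt (hTlex q hq' p hp' (Or.inr ⟨h1.symm, h2⟩)))
    · exact absurd heq.symm (ne_of_lt (hTlex q hq' p hp' (Or.inl h1)))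
  have hNinj : Set.InjOn (fun p => -Tfun p) P := by
    intro p hp q hq heq
    exact hTinj hp hq (by simpa using congrArg Neg.neg heq)
  set Pos : Finset ℤ := P.image Tfun with hPosdef
  set Neg : Finset ℤ := P.image (fun p => -Tfun p) with hNegdef
  have hPoscard : Pos.card = h * (k - h - 1) := by
    rw [hPosdef, Finset.card_image_of_injOn hTinj, hPcard]
  have hNegcard : Neg.card = h * (k - h - 1) := by
    rw [hNegdef, Finset.card_image_of_injOn hNinj, hPcard]
  -- membership of Pos and Neg in the big sumset, and bounds
  have hTsum_mem : ∀ p ∈ P, (Tfun p ∈ signedSumset h ((Finset.Icc 1 k).image a) ∧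
      -Tfun p ∈ signedSumset h ((Finset.Icc 1 k).image a)) := by
    intro p hp
    obtain ⟨a1, a2, a3, a4⟩ := (hPmem p).mp hp
    have hj1 : h+2-p.1 ≤ p.2 := by omega
    have hsub' := Tidx_subset a1 a2 hj1 a4 hh1k
    have hcard' := Tidx_card a1 a2 hj1 a4 hh1k
    have hsum' := Tidx_sum (a := a) a1 a2 hj1 a4 hh1k
    constructor
    · have := mem_signedSumset_of_subset h k a hinj _ hsub' hcard' 1 (Or.inl rfl)
      rwa [one_mul, hsum'] at this
    · have := mem_signedSumset_of_subset h k a hinj _ hsub' hcard' (-1) (Or.inr rfl)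
      rwa [neg_one_mul, hsum'] at this
  have hPosgt : ∀ x ∈ Pos, M < x := by
    intro x hx
    obtain ⟨p, hp, rfl⟩ := Finset.mem_image.mp hx
    obtain ⟨a1, a2, a3, a4⟩ := (hPmem p).mp hp
    rw [hMdef, M_eq_Tsum (by omega) hh1k]
    exact M_lt_Tsum (by omega) hh1k hmono a1 a2 a3 a4
  have hNeglt : ∀ x ∈ Neg, x < -M := by
    intro x hx
    obtain ⟨p, hp, rfl⟩ := Finset.mem_image.mp hx
    obtain ⟨a1, a2, a3, a4⟩ := (hPmem p).mp hp
    have : M < Tfun p := by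
      rw [hMdef, M_eq_Tsum (by omega) hh1k]
      exact M_lt_Tsum (by omega) hh1k hmono a1 a2 a3 a4
    simp only [neg_lt_neg_iff]
    linarith
  set Mid : Set ℤ := signedSumset h ((Finset.Icc 1 (h+1)).image a) with hMiddef
  have hMidbdd : ∀ s ∈ Mid, -M ≤ s ∧ s ≤ M :=
    signedSumset_bdd h k a hh1k (by omega) hpos hmono
  set S : Set ℤ := signedSumset h ((Finset.Icc 1 k).image a) with hSdef
  have hSfin : S.Finite := signedSumset_finite _ _
  have hMidsub : Mid ⊆ S :=
    signedSumset_mono h (Finset.image_subset_image (Finset.Icc_subset_Icc le_rfl hh1k))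
  have hPossub : (Pos : Set ℤ) ⊆ S := by
    intro x hx
    obtain ⟨p, hp, rfl⟩ := Finset.mem_image.mp (Finset.mem_coe.mp hx)
    exact (hTsum_mem p hp).1
  have hNegsub : (Neg : Set ℤ) ⊆ S := by
    intro x hx
    obtain ⟨p, hp, rfl⟩ := Finset.mem_image.mp (Finset.mem_coe.mp hx)
    exact (hTsum_mem p hp).2
  -- disjointness
  have hd1 : Disjoint (Pos : Set ℤ) (Neg : Set ℤ) := by
    rw [Set.disjoint_left]
    intro x hx hx'
    have := hPosgt x hx
    have := hNeglt x hx'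
    linarith
  have hd2 : Disjoint Mid ((Pos : Set ℤ) ∪ (Neg : Set ℤ)) := by
    rw [Set.disjoint_left]
    intro x hx hx'
    obtain ⟨hl, hr⟩ := hMidbdd x hx
    rcases hx' with hx' | hx'
    · have := hPosgt x hx'; linarith
    · have := hNeglt x hx'; linarith
  -- counting
  have hU : Mid ∪ ((Pos : Set ℤ) ∪ (Neg : Set ℤ)) ⊆ S := by
    intro x hx
    rcases hx with hx | hx | hx
    · exact hMidsub hx
    · exact hPossub hx
    · exact hNegsub hx
  have hMidfin : Mid.Finite := signedSumset_finite _ _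
  have hcount : Mid.ncard + (h * (k-h-1) + h * (k-h-1)) ≤ S.ncard := by
    have e1 : ((Pos : Set ℤ) ∪ (Neg : Set ℤ)).ncard = h * (k-h-1) + h * (k-h-1) := by
      rw [Set.ncard_union_eq hd1 (Pos.finite_toSet) (Neg.finite_toSet),
        Set.ncard_coe_finset, Set.ncard_coe_finset, hPoscard, hNegcard]
    have e2 : (Mid ∪ ((Pos : Set ℤ) ∪ (Neg : Set ℤ))).ncard
        = Mid.ncard + (h * (k-h-1) + h * (k-h-1)) := by
      rw [Set.ncard_union_eq hd2 hMidfin ((Pos.finite_toSet).union (Neg.finite_toSet)), e1]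
    rw [← e2]
    exact Set.ncard_le_ncard hU hSfin
  have harith : 2 * h * k - h ^ 2 + 1 + t ≤ ((h+1)^2 + t) + (h * (k-h-1) + h * (k-h-1)) := by
    obtain ⟨d, rfl⟩ : ∃ d, k = h + 1 + d := ⟨k - h - 1, by omega⟩
    have e : h + 1 + d - h - 1 = d := by omega
    rw [e]
    have e2 : h ^ 2 ≤ 2 * h * (h + 1 + d) := by nlinarith
    zify [e2]
    ring_nf
    omega
  calc 2 * h * k - h ^ 2 + 1 + t ≤ ((h+1)^2 + t) + (h * (k-h-1) + h * (k-h-1)) := harith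
    _ ≤ Mid.ncard + (h * (k-h-1) + h * (k-h-1)) := by
        have := hsub
        omega
    _ ≤ S.ncard := hcount
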